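/- Let n be a finite-dimensional real nilpotent Lie algebra with centre z := {X ∈ n | ∀ Y ∈ n, [X,Y] = 0}, and let D : n → n be a derivation such that the ℂ-linear extension of D|_z has no purely imaginary eigenvalue (σ(D|_z) ∩ iℝ = ∅). Then for every t ∈ ℝ with t ≠ 0, every linear functional ξ on n with ξ|_z ≠ 0, and every X ∈ n, one has ξ ∘ exp(tD) ≠ ξ ∘ exp(ad X). -/

import Mathlib

open scoped TensorProduct Nat Matrix
open NormedSpace

/-- Auxiliary: `B ↦ B *ᵥ v` as a linear map in the matrix argument. -/
noncomputable def mulVecRightAux {𝕂 : Type*} [RCLike 𝕂] {d : ℕ} (v : Fin d → 𝕂) :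
    Matrix (Fin d) (Fin d) 𝕂 →ₗ[𝕂] (Fin d → 𝕂) where
  toFun B := B *ᵥ v
  map_add' B C := Matrix.add_mulVec B C v
  map_smul' c B := Matrix.smul_mulVec c B v

lemma hasSum_exp_mulVec {𝕂 : Type*} [RCLike 𝕂] {d : ℕ} (A : Matrix (Fin d) (Fin d) 𝕂)
    (v : Fin d → 𝕂) :
    HasSum (fun n : ℕ => (n !⁻¹ : 𝕂) • ((A ^ n) *ᵥ v)) ((exp A) *ᵥ v) := by
  letI : SeminormedRing (Matrix (Fin d) (Fin d) 𝕂) := Matrix.linftyOpSemiNormedRing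
  letI : NormedRing (Matrix (Fin d) (Fin d) 𝕂) := Matrix.linftyOpNormedRing
  letI : NormedAlgebra 𝕂 (Matrix (Fin d) (Fin d) 𝕂) := Matrix.linftyOpNormedAlgebra
  have hφ : Continuous (mulVecRightAux v) := (mulVecRightAux v).continuous_of_finiteDimensional
  have hsum : Summable fun n : ℕ => (n !⁻¹ : 𝕂) • A ^ n :=
    @expSeries_summable' 𝕂 _ _ _ _ _ _ (FiniteDimensional.complete 𝕂 _) A
  have h2 := hsum.hasSum.map (mulVecRightAux v) hφ
  have h3 : mulVecRightAux v (∑' n : ℕ, (n !⁻¹ : 𝕂) • A ^ n) = (exp A) *ᵥ v := by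
    rw [exp_eq_tsum 𝕂]; rfl
  rw [h3] at h2
  have h4 : (⇑(mulVecRightAux v) ∘ fun n : ℕ => (n !⁻¹ : 𝕂) • A ^ n)
      = fun n : ℕ => (n !⁻¹ : 𝕂) • ((A ^ n) *ᵥ v) := by
    funext n
    simp [mulVecRightAux, Matrix.smul_mulVec]
  rw [h4] at h2
  exact h2

lemma exp_mulVec_of_mulVec_eq_zero {𝕂 : Type*} [RCLike 𝕂] {d : ℕ}
    (A : Matrix (Fin d) (Fin d) 𝕂) (v : Fin d → 𝕂) (h : A *ᵥ v = 0) :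
    (exp A) *ᵥ v = v := by
  have hs := hasSum_exp_mulVec A v
  have h0 : ∀ n : ℕ, n ≠ 0 → (n !⁻¹ : 𝕂) • ((A ^ n) *ᵥ v) = 0 := by
    intro n hn
    obtain ⟨m, rfl⟩ := Nat.exists_eq_succ_of_ne_zero hn
    rw [pow_succ, ← Matrix.mulVec_mulVec, h, Matrix.mulVec_zero, smul_zero]
  have := hs.tsum_eq
  rw [tsum_eq_single 0 h0] at this
  simpa using this.symm

lemma exp_mulVec_eigen {d : ℕ} (A : Matrix (Fin d) (Fin d) ℂ) (v : Fin d → ℂ) (μ : ℂ)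
    (h : A *ᵥ v = μ • v) :
    (exp A) *ᵥ v = Complex.exp μ • v := by
  have hpow : ∀ n : ℕ, (A ^ n) *ᵥ v = μ ^ n • v := by
    intro n
    induction n with
    | zero => simp
    | succ m ih =>
        rw [pow_succ, ← Matrix.mulVec_mulVec, h, Matrix.mulVec_smul, ih, smul_smul, ← pow_succ']
  have hs := hasSum_exp_mulVec A v
  have hfun : (fun n : ℕ => (n !⁻¹ : ℂ) • ((A ^ n) *ᵥ v))
      = fun n : ℕ => ((n !⁻¹ : ℂ) * μ ^ n) • v := by
    funext n; rw [hpow, smul_smul]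
  rw [hfun] at hs
  have hc : HasSum (fun n : ℕ => (n !⁻¹ : ℂ) * μ ^ n) (exp μ) := by
    have h1 : Summable fun n : ℕ => (n !⁻¹ : ℂ) • μ ^ n := expSeries_summable' μ
    have h2 := h1.hasSum
    rw [exp_eq_tsum ℂ]
    simpa [smul_eq_mul] using h2
  have := hs.unique (hc.smul_const v)
  rwa [Complex.exp_eq_exp_ℂ]

lemma exp_mulVec_mem {𝕂 : Type*} [RCLike 𝕂] {d : ℕ} (A : Matrix (Fin d) (Fin d) 𝕂)
    (S : Submodule 𝕂 (Fin d → 𝕂)) (hS : ∀ w ∈ S, A *ᵥ w ∈ S) {v : Fin d → 𝕂} (hv : v ∈ S) :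
    (exp A) *ᵥ v ∈ S := by
  have hs := hasSum_exp_mulVec A v
  have hpow : ∀ n : ℕ, (A ^ n) *ᵥ v ∈ S := by
    intro n
    induction n with
    | zero => simpa using hv
    | succ m ih =>
        rw [pow_succ', ← Matrix.mulVec_mulVec]
        exact hS _ ih
  have hmem : ∀ n : ℕ, (n !⁻¹ : 𝕂) • ((A ^ n) *ᵥ v) ∈ S := fun n => S.smul_mem _ (hpow n)
  exact S.closed_of_finiteDimensional.mem_of_tendsto hs.tendsto_sum_nat
    (Filter.Eventually.of_forall fun n => S.sum_mem fun i _ => hmem i)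

lemma toMatrix_baseChange_aux {L : Type*} [AddCommGroup L] [Module ℝ L] {d : ℕ}
    (b : Module.Basis (Fin d) ℝ L) (f : L →ₗ[ℝ] L) :
    LinearMap.toMatrix (b.baseChange ℂ) (b.baseChange ℂ) (f.baseChange ℂ)
      = (LinearMap.toMatrix b b f).map (algebraMap ℝ ℂ) := by
  ext i j
  rw [Matrix.map_apply, LinearMap.toMatrix_apply, LinearMap.toMatrix_apply,
    Module.Basis.baseChange_apply, LinearMap.baseChange_tmul, Module.Basis.baseChange_repr_tmul]
  simp [Algebra.algebraMap_eq_smul_one]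

lemma exp_map_ofReal {d : ℕ} (M : Matrix (Fin d) (Fin d) ℝ) :
    (exp M).map (algebraMap ℝ ℂ) = exp (M.map (algebraMap ℝ ℂ)) := by
  letI : SeminormedRing (Matrix (Fin d) (Fin d) ℝ) := Matrix.linftyOpSemiNormedRing
  letI : NormedRing (Matrix (Fin d) (Fin d) ℝ) := Matrix.linftyOpNormedRing
  letI : NormedAlgebra ℝ (Matrix (Fin d) (Fin d) ℝ) := Matrix.linftyOpNormedAlgebra
  letI : SeminormedRing (Matrix (Fin d) (Fin d) ℂ) := Matrix.linftyOpSemiNormedRing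
  letI : NormedRing (Matrix (Fin d) (Fin d) ℂ) := Matrix.linftyOpNormedRing
  letI : NormedAlgebra ℝ (Matrix (Fin d) (Fin d) ℂ) := Matrix.linftyOpNormedAlgebra
  letI : NormedAlgebra ℚ (Matrix (Fin d) (Fin d) ℝ) := NormedAlgebra.restrictScalars ℚ ℝ _
  have hcont : Continuous (⇑((algebraMap ℝ ℂ).mapMatrix :
      Matrix (Fin d) (Fin d) ℝ →+* Matrix (Fin d) (Fin d) ℂ)) := by
    have : Continuous (fun B : Matrix (Fin d) (Fin d) ℝ => B.map (algebraMap ℝ ℂ)) :=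
      continuous_id.matrix_map (continuous_algebraMap ℝ ℂ)
    exact this
  have h1 := map_exp ((algebraMap ℝ ℂ).mapMatrix) hcont M
  exact h1

lemma map_mulVec_ofReal {d : ℕ} (B : Matrix (Fin d) (Fin d) ℝ) (w : Fin d → ℝ) :
    (B.map (algebraMap ℝ ℂ)) *ᵥ (fun i => algebraMap ℝ ℂ (w i))
      = fun i => algebraMap ℝ ℂ ((B *ᵥ w) i) := by
  funext i
  exact ((algebraMap ℝ ℂ).map_mulVec B w i).symm

/-- Lemma 4.5(i): let `L` be a finite-dimensional real nilpotent Lie algebra with centre `z`,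
and let `D : L → L` be a derivation such that the complexification of `D|_z` has no purely
imaginary eigenvalue (`σ(D|_z) ∩ iℝ = ∅`).  Then for every `t ≠ 0`, every linear functional
`ξ` on `L` with `ξ|_z ≠ 0`, and every `X ∈ L`, one has `ξ ∘ exp(tD) ≠ ξ ∘ exp(ad X)`
(the exponentials being computed, via an arbitrary basis `b`, through the matrix exponential,
which is independent of the choice). -/
theorem exp_coadjoint_action_free
    (L : Type*) [LieRing L] [LieAlgebra ℝ L] [FiniteDimensional ℝ L]
    [LieRing.IsNilpotent L]
    (D : L →ₗ[ℝ] L)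
    (hD : ∀ x y : L, D ⁅x, y⁆ = ⁅D x, y⁆ + ⁅x, D y⁆)
    (hspec : ∀ (μ : ℂ) (v : ℂ ⊗[ℝ] L), v ≠ 0 →
      v ∈ Submodule.baseChange ℂ (LieAlgebra.center ℝ L).toSubmodule →
      LinearMap.baseChange ℂ D v = μ • v → μ.re ≠ 0)
    (d : ℕ) (b : Module.Basis (Fin d) ℝ L) :
    ∀ t : ℝ, t ≠ 0 →
      ∀ ξ : Module.Dual ℝ L, (∃ Z : L, (∀ Y : L, ⁅Z, Y⁆ = 0) ∧ ξ Z ≠ 0) →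
      ∀ X : L,
        ¬ (∀ Y : L,
          ξ (Matrix.toLin b b (NormedSpace.exp (LinearMap.toMatrix b b (t • D))) Y)
            = ξ (Matrix.toLin b b
                (NormedSpace.exp (LinearMap.toMatrix b b (LieAlgebra.ad ℝ L X))) Y)) := by
  intro t ht ξ hξ X h
  obtain ⟨Z₀, hZ₀c, hξZ₀⟩ := hξ
  set C : Submodule ℝ L := (LieAlgebra.center ℝ L).toSubmodule with hC
  have hmemC : ∀ z : L, z ∈ C ↔ ∀ x : L, ⁅x, z⁆ = 0 := by
    intro z
    exact LieModule.mem_maxTrivSubmodule ℝ L L z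
  set D' : L →ₗ[ℝ] L := t • D with hD'
  set M : Matrix (Fin d) (Fin d) ℝ := LinearMap.toMatrix b b D' with hM
  set N : Matrix (Fin d) (Fin d) ℝ := LinearMap.toMatrix b b (LieAlgebra.ad ℝ L X) with hN
  set G : L →ₗ[ℝ] L := Matrix.toLin b b (NormedSpace.exp M) with hG
  set Fl : L →ₗ[ℝ] L := Matrix.toLin b b (NormedSpace.exp N) with hFl
  -- coordinate facts
  have factG : ∀ x : L, (NormedSpace.exp M) *ᵥ ⇑(b.repr x) = ⇑(b.repr (G x)) := by
    intro x
    rw [hG]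
    rw [← LinearMap.toMatrix_mulVec_repr b b (Matrix.toLin b b (NormedSpace.exp M)) x,
      LinearMap.toMatrix_toLin]
  have factF : ∀ x : L, (NormedSpace.exp N) *ᵥ ⇑(b.repr x) = ⇑(b.repr (Fl x)) := by
    intro x
    rw [hFl]
    rw [← LinearMap.toMatrix_mulVec_repr b b (Matrix.toLin b b (NormedSpace.exp N)) x,
      LinearMap.toMatrix_toLin]
  have factM : ∀ x : L, M *ᵥ ⇑(b.repr x) = ⇑(b.repr (D' x)) := fun x =>
    LinearMap.toMatrix_mulVec_repr b b D' x
  -- D' preserves the centre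
  have hD'C : ∀ z ∈ C, D' z ∈ C := by
    intro z hz
    rw [hmemC] at hz ⊢
    intro x
    have h1 : D ⁅x, z⁆ = ⁅D x, z⁆ + ⁅x, D z⁆ := hD x z
    rw [hz x, hz (D x), map_zero, zero_add] at h1
    rw [hD']
    simp only [LinearMap.smul_apply, lie_smul]
    rw [← h1, smul_zero]
  -- Fl fixes the centre pointwise
  have hFfix : ∀ z ∈ C, Fl z = z := by
    intro z hz
    have hNz : N *ᵥ ⇑(b.repr z) = 0 := by
      rw [hN, LinearMap.toMatrix_mulVec_repr b b (LieAlgebra.ad ℝ L X) z]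
      have : ⁅X, z⁆ = 0 := (hmemC z).mp hz X
      rw [LieAlgebra.ad_apply, this]
      simp
    have h2 := exp_mulVec_of_mulVec_eq_zero N (⇑(b.repr z)) hNz
    rw [factF] at h2
    exact b.repr.injective (DFunLike.coe_injective h2)
  -- G preserves the centre
  have hGC : ∀ z ∈ C, G z ∈ C := by
    intro z hz
    set eL : L →ₗ[ℝ] (Fin d → ℝ) := b.equivFun.toLinearMap with heLdef
    have heL : ∀ x : L, eL x = ⇑(b.repr x) := by
      intro x; funext i; simp [heLdef, Module.Basis.equivFun_apply]
    set S : Submodule ℝ (Fin d → ℝ) := C.map eL with hS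
    have hSinv : ∀ w ∈ S, M *ᵥ w ∈ S := by
      rintro w ⟨y, hy, rfl⟩
      rw [heL, factM y]
      exact ⟨D' y, hD'C y hy, heL _⟩
    have hzS : ⇑(b.repr z) ∈ S := ⟨z, hz, heL z⟩
    have h3 := exp_mulVec_mem M S hSinv hzS
    rw [factG z] at h3
    obtain ⟨y, hy, hy2⟩ := h3
    rw [heL] at hy2
    have : y = G z := b.repr.injective (DFunLike.coe_injective hy2)
    rwa [this] at hy
  -- core injectivity claim
  have hinj : ∀ z ∈ C, G z = z → z = 0 := by
    intro z hzC hGz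
    by_contra hz0
    set bc : Module.Basis (Fin d) ℂ (ℂ ⊗[ℝ] L) := b.baseChange ℂ with hbc
    haveI : FiniteDimensional ℂ (ℂ ⊗[ℝ] L) := Module.Finite.of_basis bc
    set Dc : (ℂ ⊗[ℝ] L) →ₗ[ℂ] (ℂ ⊗[ℝ] L) := D'.baseChange ℂ with hDc
    set Mc : Matrix (Fin d) (Fin d) ℂ := M.map (algebraMap ℝ ℂ) with hMcdef
    have hMc : LinearMap.toMatrix bc bc Dc = Mc := toMatrix_baseChange_aux b D'
    set g : (ℂ ⊗[ℝ] L) →ₗ[ℂ] (ℂ ⊗[ℝ] L) := Matrix.toLin bc bc (NormedSpace.exp Mc) with hg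
    have factDc : ∀ u : ℂ ⊗[ℝ] L, Mc *ᵥ ⇑(bc.repr u) = ⇑(bc.repr (Dc u)) := by
      intro u
      rw [← hMc]
      exact LinearMap.toMatrix_mulVec_repr bc bc Dc u
    have factg : ∀ u : ℂ ⊗[ℝ] L,
        (NormedSpace.exp Mc) *ᵥ ⇑(bc.repr u) = ⇑(bc.repr (g u)) := by
      intro u
      rw [hg, ← LinearMap.toMatrix_mulVec_repr bc bc
        (Matrix.toLin bc bc (NormedSpace.exp Mc)) u, LinearMap.toMatrix_toLin]
    set Cc : Submodule ℂ (ℂ ⊗[ℝ] L) := C.baseChange ℂ with hCcdef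
    set K : Submodule ℂ (ℂ ⊗[ℝ] L) := Cc ⊓ LinearMap.ker (g - LinearMap.id) with hK
    set v : ℂ ⊗[ℝ] L := (1 : ℂ) ⊗ₜ[ℝ] z with hv
    have hvrepr : ⇑(bc.repr v) = fun i => algebraMap ℝ ℂ (b.repr z i) := by
      funext i
      rw [hv, hbc, Module.Basis.baseChange_repr_tmul]
      simp [Algebra.algebraMap_eq_smul_one]
    have hv0 : v ≠ 0 := by
      intro h0
      apply hz0
      have h1 : ⇑(bc.repr v) = 0 := by rw [h0, map_zero]; rfl
      rw [hvrepr] at h1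
      have h2 : ⇑(b.repr z) = 0 := by
        funext i
        have h3 := congrFun h1 i
        simpa using h3
      exact b.repr.map_eq_zero_iff.mp (DFunLike.coe_injective (h2.trans (Finsupp.coe_zero).symm))
    have hvK : v ∈ K := by
      rw [hK]
      refine Submodule.mem_inf.mpr ⟨?_, ?_⟩
      · exact Submodule.tmul_mem_baseChange_of_mem 1 hzC
      · rw [LinearMap.mem_ker, LinearMap.sub_apply, LinearMap.id_apply, sub_eq_zero]
        apply bc.repr.injective
        apply DFunLike.coe_injective
        show ⇑(bc.repr (g v)) = ⇑(bc.repr v)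
        rw [← factg v, hvrepr, hMcdef, ← exp_map_ofReal M, map_mulVec_ofReal, factG z, hGz]
    have hKinv : ∀ u ∈ K, Dc u ∈ K := by
      intro u hu
      obtain ⟨hu1, hu2⟩ := Submodule.mem_inf.mp hu
      refine Submodule.mem_inf.mpr ⟨?_, ?_⟩
      · have hCcInv : Cc ≤ Submodule.comap Dc Cc := by
          rw [hCcdef]
          nth_rewrite 1 [Submodule.baseChange_eq_span]
          apply Submodule.span_le.mpr
          rintro w ⟨y, hy, rfl⟩
          show Dc ((TensorProduct.mk ℝ ℂ L 1) y) ∈ Cc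
          have : (TensorProduct.mk ℝ ℂ L 1) y = (1 : ℂ) ⊗ₜ[ℝ] y := rfl
          rw [this, hDc, LinearMap.baseChange_tmul]
          exact Submodule.tmul_mem_baseChange_of_mem 1 (hD'C y hy)
        exact hCcInv hu1
      · have hgu : g u = u := by
          rw [LinearMap.mem_ker, LinearMap.sub_apply, LinearMap.id_apply, sub_eq_zero] at hu2
          exact hu2
        have hcommM : Commute (NormedSpace.exp Mc) Mc := (Commute.refl Mc).exp_left
        have hMcLin : Matrix.toLin bc bc Mc = Dc := by rw [← hMc, Matrix.toLin_toMatrix]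
        have hcomm2 : g ∘ₗ Dc = Dc ∘ₗ g := by
          rw [hg, ← hMcLin, ← Matrix.toLin_mul, ← Matrix.toLin_mul, hcommM.eq]
        have h7 := LinearMap.congr_fun hcomm2 u
        simp only [LinearMap.comp_apply] at h7
        rw [LinearMap.mem_ker, LinearMap.sub_apply, LinearMap.id_apply, sub_eq_zero]
        rw [h7, hgu]
    haveI : Nontrivial ↥K :=
      nontrivial_of_ne ⟨v, hvK⟩ 0 (fun hcon => hv0 (by simpa using congrArg Subtype.val hcon))
    obtain ⟨μ, hμ⟩ := Module.End.exists_eigenvalue (Dc.restrict hKinv)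
    obtain ⟨u, hu⟩ := hμ.exists_hasEigenvector
    have hueq : Dc (u : ℂ ⊗[ℝ] L) = μ • (u : ℂ ⊗[ℝ] L) := by
      have h5 := hu.apply_eq_smul
      have h6 := congrArg Subtype.val h5
      rwa [LinearMap.restrict_coe_apply] at h6
    have hu0 : (u : ℂ ⊗[ℝ] L) ≠ 0 := fun hc => hu.2 (Subtype.ext hc)
    have huCc : (u : ℂ ⊗[ℝ] L) ∈ Cc := (Submodule.mem_inf.mp u.2).1
    have hgu : g (u : ℂ ⊗[ℝ] L) = (u : ℂ ⊗[ℝ] L) := by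
      have := (Submodule.mem_inf.mp u.2).2
      rwa [LinearMap.mem_ker, LinearMap.sub_apply, LinearMap.id_apply, sub_eq_zero] at this
    have htC : (t : ℂ) ≠ 0 := by exact_mod_cast ht
    -- eigenvalue for D itself
    have h8 : LinearMap.baseChange ℂ D (u : ℂ ⊗[ℝ] L) = ((t : ℂ)⁻¹ * μ) • (u : ℂ ⊗[ℝ] L) := by
      have h9 : Dc (u : ℂ ⊗[ℝ] L) = t • (LinearMap.baseChange ℂ D (u : ℂ ⊗[ℝ] L)) := by
        rw [hDc, hD', LinearMap.baseChange_smul]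
        rfl
      have h10 : (t : ℂ) • (LinearMap.baseChange ℂ D (u : ℂ ⊗[ℝ] L)) = μ • (u : ℂ ⊗[ℝ] L) := by
        rw [← hueq, h9]
        rw [show ((t : ℂ)) = algebraMap ℝ ℂ t from rfl, algebraMap_smul]
      rw [← smul_smul, ← h10, inv_smul_smul₀ htC]
    have hre := hspec ((t : ℂ)⁻¹ * μ) (u : ℂ ⊗[ℝ] L) hu0 huCc h8
    have hμre : μ.re ≠ 0 := by
      intro hc
      apply hre
      rw [← Complex.ofReal_inv, Complex.mul_re]
      simp [hc]
    -- exponential side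
    have h11 : Mc *ᵥ ⇑(bc.repr (u : ℂ ⊗[ℝ] L)) = μ • ⇑(bc.repr (u : ℂ ⊗[ℝ] L)) := by
      rw [factDc, hueq, map_smul]
      rfl
    have h12 := exp_mulVec_eigen Mc (⇑(bc.repr (u : ℂ ⊗[ℝ] L))) μ h11
    rw [factg (u : ℂ ⊗[ℝ] L), hgu] at h12
    have hrepru0 : ⇑(bc.repr (u : ℂ ⊗[ℝ] L)) ≠ 0 := by
      intro hc
      exact hu0 (bc.repr.map_eq_zero_iff.mp
        (DFunLike.coe_injective (hc.trans (Finsupp.coe_zero).symm)))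
    have hexpμ : Complex.exp μ = 1 := by
      have h13 : (Complex.exp μ - 1) • ⇑(bc.repr (u : ℂ ⊗[ℝ] L)) = 0 := by
        rw [sub_smul, one_smul, ← h12, sub_self]
      rcases smul_eq_zero.mp h13 with h14 | h14
      · exact (sub_eq_zero.mp h14)
      · exact absurd h14 hrepru0
    have hμre0 : μ.re = 0 := by
      have h15 := congrArg norm hexpμ
      rw [Complex.norm_exp, norm_one] at h15
      exact (Real.exp_eq_one_iff _).mp h15
    exact hμre hμre0
  -- conclusion
  have hZ₀mem : Z₀ ∈ C := by
    rw [hmemC]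
    intro x
    rw [← lie_skew, hZ₀c x, neg_zero]
  set Gm : L →ₗ[ℝ] L := G - LinearMap.id with hGm
  have hsub : ∀ x ∈ C, Gm x ∈ C := by
    intro x hx
    rw [hGm, LinearMap.sub_apply, LinearMap.id_apply]
    exact C.sub_mem (hGC x hx) hx
  set ψ : ↥C →ₗ[ℝ] ↥C := Gm.restrict hsub with hψ
  have hψinj : Function.Injective ψ := by
    rw [← LinearMap.ker_eq_bot, LinearMap.ker_eq_bot']
    intro u hu
    have h4 : Gm (u : L) = 0 := by
      have := congrArg (Subtype.val) hu
      rwa [LinearMap.restrict_coe_apply] at this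
    rw [hGm, LinearMap.sub_apply, LinearMap.id_apply, sub_eq_zero] at h4
    exact Subtype.ext (hinj (u : L) u.2 h4)
  have hψsurj : Function.Surjective ψ := (LinearMap.injective_iff_surjective).mp hψinj
  obtain ⟨W, hW⟩ := hψsurj ⟨Z₀, hZ₀mem⟩
  have hW' : G (W : L) - (W : L) = Z₀ := by
    have := congrArg (Subtype.val) hW
    rwa [LinearMap.restrict_coe_apply, hGm, LinearMap.sub_apply, LinearMap.id_apply] at this
  have hFW : Fl (W : L) = (W : L) := hFfix _ W.2
  have : ξ Z₀ = 0 := by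
    rw [← hW', map_sub, h (W : L), hFW, sub_self]
  exact hξZ₀ this
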